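/- arXiv:1307.1029 — 3 statements merged into one kernel-verified Lean document; each statement's English description precedes it below -/
import Mathlib

section
/- Let X be a topological space and let 𝒰 be a locally finite family of subsets of X whose union is all of X. Then there exists a subfamily 𝒱 ⊆ 𝒰 which still covers X and which is irreducible, i.e., no proper subfamily of 𝒱 covers X. -/
/-- Helper: a finite nonempty subset of a chain (under `⊆`) has a least element in the chain. -/
lemma chain_finite_lb {α : Type*} {c : Set (Set α)} (hchain : IsChain (· ⊆ ·) c)
    {s : Set (Set α)} (hs : s.Finite) (hsc : s ⊆ c) (hne : s.Nonempty) :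
    ∃ lb ∈ s, ∀ t ∈ s, lb ⊆ t := by
  obtain ⟨lb, hlb, hmin⟩ := Set.Finite.exists_minimalFor id s hs hne
  refine ⟨lb, hlb, fun t ht => ?_⟩
  rcases eq_or_ne lb t with rfl | hne'
  · exact subset_rfl
  rcases hchain (hsc hlb) (hsc ht) hne' with h | h
  · exact h
  · exact hmin ht h

/-- **Irreducible subcovers of locally finite covers.**
If `𝒰` is a locally finite family of subsets of a topological space `X` whose union
is all of `X`, then there is a subfamily `𝒱 ⊆ 𝒰` which still covers `X` and which is
irreducible: no proper subfamily of `𝒱` covers `X`. -/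
theorem exists_irreducible_subcover_of_locallyFinite
    {X : Type*} [TopologicalSpace X] (𝒰 : Set (Set X))
    (hlf : LocallyFinite (fun U : 𝒰 => (U : Set X)))
    (hcov : ⋃₀ 𝒰 = Set.univ) :
    ∃ 𝒱 ⊆ 𝒰, ⋃₀ 𝒱 = Set.univ ∧ ∀ 𝒲, 𝒲 ⊂ 𝒱 → ⋃₀ 𝒲 ≠ Set.univ := by
  classical
  have key : ∀ c ⊆ {𝒱 | 𝒱 ⊆ 𝒰 ∧ ⋃₀ 𝒱 = Set.univ}, IsChain (· ⊆ ·) c →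
      ∃ lb ∈ {𝒱 | 𝒱 ⊆ 𝒰 ∧ ⋃₀ 𝒱 = Set.univ}, ∀ s ∈ c, lb ⊆ s := by
    intro c hcS hchain
    rcases c.eq_empty_or_nonempty with rfl | hne
    · exact ⟨𝒰, ⟨subset_rfl, hcov⟩, by simp⟩
    refine ⟨⋂₀ c, ⟨?_, ?_⟩, fun s hs => Set.sInter_subset_of_mem hs⟩
    · obtain ⟨𝒱₀, h𝒱₀⟩ := hne
      exact (Set.sInter_subset_of_mem h𝒱₀).trans (hcS h𝒱₀).1
    · ext x
      simp only [Set.mem_univ, iff_true]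
      by_contra hx
      -- The sets of 𝒰 containing x form a finite family F.
      have hFfin : {U : Set X | U ∈ 𝒰 ∧ x ∈ U}.Finite := by
        have := hlf.point_finite x
        have himg : {U : Set X | U ∈ 𝒰 ∧ x ∈ U} ⊆
            Subtype.val '' {i : 𝒰 | x ∈ (i : Set X)} := by
          rintro U ⟨hU, hxU⟩
          exact ⟨⟨U, hU⟩, hxU, rfl⟩
        exact (this.image Subtype.val).subset himg
      -- For each U ∈ F choose a member of the chain not containing U.
      have hchoice : ∀ U ∈ {U : Set X | U ∈ 𝒰 ∧ x ∈ U}, ∃ 𝒱 ∈ c, U ∉ 𝒱 := by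
        rintro U ⟨hU, hxU⟩
        by_contra h
        push_neg at h
        exact hx ⟨U, fun 𝒱 h𝒱 => h 𝒱 h𝒱, hxU⟩
      choose! f hfc hfU using hchoice
      -- The chosen chain elements form a finite subset of the chain; take its least element.
      rcases {U : Set X | U ∈ 𝒰 ∧ x ∈ U}.eq_empty_or_nonempty with hemp | hFne
      · -- then x is covered by some U ∈ 𝒰, contradiction
        obtain ⟨U, hU, hxU⟩ := (Set.sUnion_eq_univ_iff.mp hcov) x
        have hmem : U ∈ {U : Set X | U ∈ 𝒰 ∧ x ∈ U} := ⟨hU, hxU⟩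
        rw [hemp] at hmem
        exact hmem
      obtain ⟨lb, hlb, hmin⟩ := chain_finite_lb hchain
        (hFfin.image f) (by rintro _ ⟨U, hU, rfl⟩; exact hfc U hU) (hFne.image f)
      obtain ⟨V, hVF, rfl⟩ := hlb
      -- lb = f V ∈ c covers X, so x ∈ some W ∈ f V; but W ∈ F so f V ⊆ f W and W ∉ f W.
      obtain ⟨W, hWfV, hxW⟩ := (Set.sUnion_eq_univ_iff.mp (hcS (hfc V hVF)).2) x
      have hWF : W ∈ {U : Set X | U ∈ 𝒰 ∧ x ∈ U} := ⟨(hcS (hfc V hVF)).1 hWfV, hxW⟩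
      exact hfU W hWF (hmin (f W) ⟨W, hWF, rfl⟩ hWfV)
  obtain ⟨𝒱, hmin⟩ := zorn_superset {𝒱 | 𝒱 ⊆ 𝒰 ∧ ⋃₀ 𝒱 = Set.univ} key
  refine ⟨𝒱, hmin.prop.1, hmin.prop.2, fun 𝒲 h𝒲 hcov' => ?_⟩
  exact h𝒲.ne (hmin.eq_of_subset ⟨h𝒲.subset.trans hmin.prop.1, hcov'⟩ h𝒲.subset)
end

section
/- Let X be a proper metric space and let 𝒰 be a uniformly bounded irreducible open cover of X. Then every bounded subset B of X meets only finitely many members of 𝒰; in particular each member U ∈ 𝒰 intersects only finitely many other elements of 𝒰. -/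
open Set Metric Filter Topology

/-- In an irreducible cover, each member has a point belonging to no other member. -/
lemma exists_private_point {X : Type*} (𝒰 : Set (Set X))
    (hcov : ⋃₀ 𝒰 = Set.univ)
    (hirr : ∀ 𝒱, 𝒱 ⊂ 𝒰 → ⋃₀ 𝒱 ≠ Set.univ)
    {U : Set X} (hU : U ∈ 𝒰) :
    ∃ x, x ∈ U ∧ ∀ V ∈ 𝒰, x ∈ V → V = U := by
  by_contra h
  push_neg at h
  apply hirr (𝒰 \ {U}) ⟨Set.diff_subset, fun hsub => (hsub hU).2 rfl⟩
  rw [Set.eq_univ_iff_forall]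
  intro x
  have hx : x ∈ ⋃₀ 𝒰 := by rw [hcov]; trivial
  obtain ⟨V, hV, hxV⟩ := hx
  by_cases hVU : V = U
  · subst hVU
    obtain ⟨W, hW, hxW, hWV⟩ := h x hxV
    exact ⟨W, ⟨hW, hWV⟩, hxW⟩
  · exact ⟨V, ⟨hV, hVU⟩, hxV⟩

/-- **Bounded sets meet only finitely many members of a uniformly bounded irreducible
open cover.** Let `X` be a proper metric space and `𝒰` a uniformly bounded irreducible
open cover of `X`.  Then every bounded subset `B` of `X` meets only finitely many
members of `𝒰`; in particular each member `U ∈ 𝒰` intersects only finitely many other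
elements of `𝒰`. -/
theorem bounded_meets_finitely_many_of_irreducible
    {X : Type*} [MetricSpace X] [ProperSpace X] (𝒰 : Set (Set X))
    (hopen : ∀ U ∈ 𝒰, IsOpen U)
    (hbdd : ∃ a > (0 : ℝ), ∀ U ∈ 𝒰, EMetric.diam U ≤ ENNReal.ofReal a)
    (hcov : ⋃₀ 𝒰 = Set.univ)
    (hirr : ∀ 𝒱, 𝒱 ⊂ 𝒰 → ⋃₀ 𝒱 ≠ Set.univ) :
    (∀ B : Set X, Bornology.IsBounded B → {U ∈ 𝒰 | (U ∩ B).Nonempty}.Finite) ∧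
      ∀ U ∈ 𝒰, {V ∈ 𝒰 | V ≠ U ∧ (V ∩ U).Nonempty}.Finite := by
  obtain ⟨a, ha, hdiam⟩ := hbdd
  -- choose a private point in each member
  cases isEmpty_or_nonempty X with
  | inl hempty =>
    constructor
    · intro B _
      have : {U ∈ 𝒰 | (U ∩ B).Nonempty} = ∅ := by
        ext U; simp only [Set.mem_setOf_eq, Set.mem_empty_iff_false, iff_false]
        rintro ⟨_, x, _⟩; exact hempty.false x
      rw [this]; exact Set.finite_empty
    · intro U _
      have : {V ∈ 𝒰 | V ≠ U ∧ (V ∩ U).Nonempty} = ∅ := by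
        ext V; simp only [Set.mem_setOf_eq, Set.mem_empty_iff_false, iff_false]
        rintro ⟨_, _, x, _⟩; exact hempty.false x
      rw [this]; exact Set.finite_empty
  | inr hne =>
  have hpriv : ∀ U ∈ 𝒰, ∃ x, x ∈ U ∧ ∀ V ∈ 𝒰, x ∈ V → V = U :=
    fun U hU => exists_private_point 𝒰 hcov hirr hU
  choose! f hfmem hfuniq using hpriv
  have main : ∀ B : Set X, Bornology.IsBounded B → {U ∈ 𝒰 | (U ∩ B).Nonempty}.Finite := by
    intro B hB
    by_contra hinf
    replace hinf : {U ∈ 𝒰 | (U ∩ B).Nonempty}.Infinite := hinf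
    set 𝒮 := {U ∈ 𝒰 | (U ∩ B).Nonempty} with h𝒮
    -- pick a basepoint
    obtain ⟨U0, hU0⟩ := hinf.nonempty
    obtain ⟨x0, _, hx0B⟩ := hU0.2
    obtain ⟨r, hr⟩ := hB.subset_closedBall x0
    -- the private points of members of 𝒮 lie in a compact ball
    have hfin : (f '' 𝒮) ⊆ closedBall x0 (a + r) := by
      rintro _ ⟨U, hU, rfl⟩
      obtain ⟨b, hbU, hbB⟩ := hU.2
      have h1 : dist (f U) b ≤ a := by
        have := (hdiam U hU.1)
        have hedist : edist (f U) b ≤ ENNReal.ofReal a :=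
          le_trans (EMetric.edist_le_diam_of_mem (hfmem U hU.1) hbU) this
        exact (edist_le_ofReal ha.le).1 hedist
      have h2 : dist b x0 ≤ r := hr hbB
      calc dist (f U) x0 ≤ dist (f U) b + dist b x0 := dist_triangle _ _ _
        _ ≤ a + r := add_le_add h1 h2
    have hinj : Set.InjOn f 𝒮 := by
      intro U hU V hV hUV
      have h1 : f V ∈ U := by rw [← hUV]; exact hfmem U hU.1
      exact hfuniq V hV.1 U hU.1 h1
    have himg : (f '' 𝒮).Infinite := hinf.image hinj
    obtain ⟨x, _, hacc⟩ :=
      himg.exists_accPt_of_subset_isCompact (isCompact_closedBall x0 (a + r)) hfin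
    -- x lies in some member W, an open neighborhood
    have hx : x ∈ ⋃₀ 𝒰 := by rw [hcov]; trivial
    obtain ⟨W, hW, hxW⟩ := hx
    have hWnhds : W ∈ 𝓝 x := (hopen W hW).mem_nhds hxW
    rw [accPt_iff_nhds] at hacc
    obtain ⟨y, ⟨hyW, hy𝒮⟩, hyx⟩ := hacc W hWnhds
    obtain ⟨z, ⟨hzmem, hz𝒮⟩, hzx⟩ := hacc (W \ {y})
      (Filter.inter_mem hWnhds (isOpen_compl_singleton.mem_nhds (fun h => hyx h.symm)))
    obtain ⟨U, hU, rfl⟩ := hy𝒮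
    obtain ⟨V, hV, rfl⟩ := hz𝒮
    have hUW : W = U := hfuniq U hU.1 W hW hyW
    have hVW : W = V := hfuniq V hV.1 W hW hzmem.1
    exact hzmem.2 (by rw [← hVW, hUW]; exact rfl)
  refine ⟨main, fun U hU => ?_⟩
  have hUbdd : Bornology.IsBounded U := by
    rw [Metric.isBounded_iff_ediam_ne_top]
    exact ne_top_of_le_ne_top ENNReal.ofReal_ne_top (hdiam U hU)
  exact (main U hUbdd).subset fun V hV => ⟨hV.1, hV.2.2⟩
end

section
/- Let g : X → Y be a continuous proper map between metric spaces with Y a proper metric space. Then for every y ∈ Y and every ε > 0 there is a neighborhood V of y in Y such that diam(g⁻¹(V)) ≤ diam(g⁻¹(y)) + ε. -/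
/-- **Neighborhoods with preimages of almost-minimal diameter.**
Let `g : X → Y` be a continuous proper map between metric spaces with `Y` a proper
metric space.  Then for every `y ∈ Y` and every `ε > 0` there is a neighborhood `V`
of `y` in `Y` such that `diam (g⁻¹ V) ≤ diam (g⁻¹ y) + ε`. -/
theorem exists_nhd_preimage_diam_le
    {X Y : Type*} [MetricSpace X] [MetricSpace Y] [ProperSpace Y] (g : X → Y)
    (hcont : Continuous g)
    (hproper : ∀ K : Set Y, IsCompact K → IsCompact (g ⁻¹' K)) :
    ∀ y : Y, ∀ ε > (0 : ℝ), ∃ V ∈ nhds y,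
      EMetric.diam (g ⁻¹' V) ≤ EMetric.diam (g ⁻¹' {y}) + ENNReal.ofReal ε := by
  intro y ε hε
  set d := EMetric.diam (g ⁻¹' {y}) with hd_def
  rcases eq_or_ne d ⊤ with hd | hd
  · exact ⟨Set.univ, Filter.univ_mem, by simp [hd]⟩
  by_contra h
  push_neg at h
  set c := d + ENNReal.ofReal ε with hc_def
  have hc : d < c := ENNReal.lt_add_right hd (ENNReal.ofReal_pos.2 hε).ne'
  -- For each n, pick a pair of points in the preimage of the ball of radius 1/(n+1)
  -- with edist > c.
  have key : ∀ n : ℕ, ∃ p : X × X,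
      p.1 ∈ g ⁻¹' Metric.closedBall y (1 / (n + 1)) ∧
      p.2 ∈ g ⁻¹' Metric.closedBall y (1 / (n + 1)) ∧ c < edist p.1 p.2 := by
    intro n
    have hV : Metric.closedBall y (1 / (n + 1)) ∈ nhds y :=
      Metric.closedBall_mem_nhds y (by positivity)
    have h2 : ¬ EMetric.diam (g ⁻¹' Metric.closedBall y (1 / (n + 1))) ≤ c :=
      not_le.2 (h _ hV)
    rw [EMetric.diam, EMetric.diam_le_iff] at h2
    push_neg at h2
    obtain ⟨a, ha, b, hb, hab⟩ := h2
    exact ⟨(a, b), ha, hb, hab⟩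
  choose p hp1 hp2 hp3 using key
  have hK : IsCompact (g ⁻¹' Metric.closedBall y 1) :=
    hproper _ (isCompact_closedBall y 1)
  have hsub : ∀ n : ℕ, g ⁻¹' Metric.closedBall y (1 / (n + 1)) ⊆
      g ⁻¹' Metric.closedBall y 1 := by
    intro n
    apply Set.preimage_mono
    apply Metric.closedBall_subset_closedBall
    rw [div_le_one (by positivity)]
    linarith [Nat.cast_nonneg (α := ℝ) n]
  obtain ⟨x, hx, φ, hφ, hxt⟩ :=
    hK.tendsto_subseq (x := fun n => (p n).1) (fun n => hsub n (hp1 n))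
  obtain ⟨x', hx', ψ, hψ, hxt'⟩ :=
    hK.tendsto_subseq (x := fun n => (p (φ n)).2) (fun n => hsub _ (hp2 _))
  -- the final index sequence
  set σ : ℕ → ℕ := fun n => φ (ψ n) with hσ
  have hσmono : StrictMono σ := hφ.comp hψ
  have h1t : Filter.Tendsto (fun n => (p (σ n)).1) Filter.atTop (nhds x) :=
    hxt.comp hψ.tendsto_atTop
  have h2t : Filter.Tendsto (fun n => (p (σ n)).2) Filter.atTop (nhds x') := hxt'
  -- g of both sequences tends to y
  have hgy : ∀ (q : ℕ → X), (∀ n, q n ∈ g ⁻¹' Metric.closedBall y (1 / (σ n + 1))) →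
      Filter.Tendsto (fun n => g (q n)) Filter.atTop (nhds y) := by
    intro q hq
    rw [Metric.tendsto_atTop]
    intro δ hδ
    obtain ⟨N, hN⟩ := exists_nat_gt (1 / δ)
    refine ⟨N, fun n hn => ?_⟩
    have h1 : dist (g (q n)) y ≤ 1 / (σ n + 1) := hq n
    have h2 : (N : ℝ) ≤ σ n := by
      have : n ≤ σ n := hσmono.le_apply
      have : (n : ℝ) ≤ σ n := by exact_mod_cast this
      have : (N : ℝ) ≤ n := by exact_mod_cast hn
      linarith
    have h3 : 1 / ((σ n : ℝ) + 1) < δ := by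
      rw [div_lt_iff₀ (by positivity)]
      rw [div_lt_iff₀ hδ] at hN
      nlinarith [hδ.le]
    linarith
  have hgx : g x = y := by
    have := (hcont.tendsto x).comp h1t
    exact tendsto_nhds_unique this (hgy _ (fun n => hp1 (σ n)))
  have hgx' : g x' = y := by
    have := (hcont.tendsto x').comp h2t
    exact tendsto_nhds_unique this (hgy _ (fun n => hp2 (σ n)))
  have hedist : Filter.Tendsto (fun n => edist (p (σ n)).1 (p (σ n)).2)
      Filter.atTop (nhds (edist x x')) := h1t.edist h2t
  have hle : c ≤ edist x x' := ge_of_tendsto' hedist (fun n => (hp3 (σ n)).le)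
  have hmem : edist x x' ≤ d :=
    EMetric.edist_le_diam_of_mem (by simp [hgx]) (by simp [hgx'])
  exact absurd (hle.trans hmem) (not_le.2 hc)
end
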